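/- X and Y are independent if and only if Var(D(X,Y)) = 0, where D(x,y) = 6·(F(x,y) − H(x)·G(y)). -/

import Mathlib

open MeasureTheory ProbabilityTheory
open Set Filter Topology

/-- Let `(X,Y)` have a continuous, everywhere strictly positive joint
density `f` on `ℝ²`, joint CDF `F` and marginal CDFs `H`, `G`, and let
`D(x,y) = 6·(F(x,y) − H(x)·G(y))` be the dependence function. Then `X` and `Y` are
independent if and only if `Var(D(X,Y)) = 0`. -/
theorem indepFun_iff_variance_dependence_function_eq_zero
    {Ω : Type*} [MeasurableSpace Ω] {μ : Measure Ω} [IsProbabilityMeasure μ]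
    (X Y : Ω → ℝ) (hX : Measurable X) (hY : Measurable Y)
    (f : ℝ × ℝ → ℝ) (hfc : Continuous f) (hfpos : ∀ p, 0 < f p)
    (hlaw : Measure.map (fun ω => (X ω, Y ω)) μ
      = (volume : Measure (ℝ × ℝ)).withDensity (fun p => ENNReal.ofReal (f p)))
    (F : ℝ → ℝ → ℝ) (H G : ℝ → ℝ)
    (hF : ∀ x y, F x y = (μ {ω | X ω ≤ x ∧ Y ω ≤ y}).toReal)
    (hH : ∀ x, H x = (μ {ω | X ω ≤ x}).toReal)
    (hG : ∀ y, G y = (μ {ω | Y ω ≤ y}).toReal)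
    (D : ℝ → ℝ → ℝ)
    (hD : ∀ x y, D x y = 6 * (F x y - H x * G y)) :
    IndepFun X Y μ ↔ variance (fun ω => D (X ω) (Y ω)) μ = 0 := by
  classical
  set Z : Ω → ℝ × ℝ := fun ω => (X ω, Y ω) with hZdef
  have hZm : Measurable Z := hX.prodMk hY
  set ν : Measure (ℝ × ℝ) := Measure.map Z μ with hνdef
  have hνP : IsProbabilityMeasure ν := Measure.isProbabilityMeasure_map hZm.aemeasurable
  -- expressions via ν
  have hFν : ∀ x y, F x y = (ν (Iic x ×ˢ Iic y)).toReal := by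
    intro x y
    rw [hF, hνdef, Measure.map_apply hZm (measurableSet_Iic.prod measurableSet_Iic)]
    congr 1
  have hHν : ∀ x, H x = (ν (Iic x ×ˢ univ)).toReal := by
    intro x
    have hset : {ω | X ω ≤ x} = Z ⁻¹' (Iic x ×ˢ univ) := by
      ext ω; simp [Z]
    rw [hH, hset, hνdef, Measure.map_apply hZm (measurableSet_Iic.prod MeasurableSet.univ)]
  have hGν : ∀ y, G y = (ν (univ ×ˢ Iic y)).toReal := by
    intro y
    have hset : {ω | Y ω ≤ y} = Z ⁻¹' (univ ×ˢ Iic y) := by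
      ext ω; simp [Z]
    rw [hG, hset, hνdef, Measure.map_apply hZm (MeasurableSet.univ.prod measurableSet_Iic)]
  -- basic bounds
  have htoReal_le_one : ∀ s : Set (ℝ × ℝ), (ν s).toReal ≤ 1 := by
    intro s
    have h1 : ν s ≤ 1 := prob_le_one
    simpa using ENNReal.toReal_mono ENNReal.one_ne_top h1
  have htoReal_mono : ∀ {s t : Set (ℝ × ℝ)}, s ⊆ t → (ν s).toReal ≤ (ν t).toReal := by
    intro s t hst
    exact ENNReal.toReal_mono (measure_ne_top ν t) (measure_mono hst)
  have hH01 : ∀ x, 0 ≤ H x ∧ H x ≤ 1 := fun x => by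
    rw [hHν]; exact ⟨ENNReal.toReal_nonneg, htoReal_le_one _⟩
  have hG01 : ∀ y, 0 ≤ G y ∧ G y ≤ 1 := fun y => by
    rw [hGν]; exact ⟨ENNReal.toReal_nonneg, htoReal_le_one _⟩
  have hF0 : ∀ x y, 0 ≤ F x y := fun x y => by rw [hFν]; exact ENNReal.toReal_nonneg
  have hFH : ∀ x y, F x y ≤ H x := fun x y => by
    rw [hFν, hHν]; exact htoReal_mono (prod_mono le_rfl (subset_univ _))
  have hHmono : Monotone H := by
    intro a b hab
    rw [hHν, hHν]
    exact htoReal_mono (prod_mono (Iic_subset_Iic.mpr hab) le_rfl)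
  have hGmono : Monotone G := by
    intro a b hab
    rw [hGν, hGν]
    exact htoReal_mono (prod_mono le_rfl (Iic_subset_Iic.mpr hab))
  have hFmono : ∀ {a b a' b' : ℝ}, a ≤ a' → b ≤ b' → F a b ≤ F a' b' := by
    intro a b a' b' h1 h2
    rw [hFν, hFν]
    exact htoReal_mono (prod_mono (Iic_subset_Iic.mpr h1) (Iic_subset_Iic.mpr h2))
  have hDbound : ∀ x y, |D x y| ≤ 12 := by
    intro x y
    rw [hD]
    have h1 := hH01 x; have h2 := hG01 y; have h3 := hF0 x y; have h4 := hFH x y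
    rw [abs_le]
    constructor <;> nlinarith [h1.1, h1.2, h2.1, h2.2]
  -- measurability of D as a function on the plane
  have hνwd : ∀ s : Set (ℝ × ℝ), MeasurableSet s → ν s = ∫⁻ p, s.indicator (fun p => ENNReal.ofReal (f p)) p ∂volume := by
    intro s hs
    rw [hlaw, withDensity_apply _ hs, lintegral_indicator hs]
  have hFmeas : Measurable (fun q : ℝ × ℝ => F q.1 q.2) := by
    have hk : Measurable (fun qp : (ℝ × ℝ) × (ℝ × ℝ) =>
        if qp.2.1 ≤ qp.1.1 ∧ qp.2.2 ≤ qp.1.2 then ENNReal.ofReal (f qp.2) else 0) := by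
      refine Measurable.ite ?_ ?_ measurable_const
      · exact ((measurableSet_le (measurable_fst.comp measurable_snd) (measurable_fst.comp measurable_fst)).inter
          (measurableSet_le (measurable_snd.comp measurable_snd) (measurable_snd.comp measurable_fst)))
      · exact (ENNReal.measurable_ofReal.comp hfc.measurable).comp measurable_snd
    have h1 : Measurable (fun q : ℝ × ℝ => ∫⁻ p, (if p.1 ≤ q.1 ∧ p.2 ≤ q.2 then ENNReal.ofReal (f p) else 0) ∂volume) :=
      hk.lintegral_prod_right'
    have h2 : (fun q : ℝ × ℝ => F q.1 q.2)
        = fun q => (∫⁻ p, (if p.1 ≤ q.1 ∧ p.2 ≤ q.2 then ENNReal.ofReal (f p) else 0) ∂volume).toReal := by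
      funext q
      rw [hFν, hνwd _ (measurableSet_Iic.prod measurableSet_Iic)]
      congr 1
      congr 1
      funext p
      rw [Set.indicator_apply]
      by_cases h : p.1 ≤ q.1 ∧ p.2 ≤ q.2
      · simp only [Set.mem_prod, Set.mem_Iic]
      · simp only [Set.mem_prod, Set.mem_Iic]
    rw [h2]
    exact h1.ennreal_toReal
  have hHmeas : Measurable H := hHmono.measurable
  have hGmeas : Measurable G := hGmono.measurable
  have hDmeas : Measurable (fun q : ℝ × ℝ => D q.1 q.2) := by
    have : (fun q : ℝ × ℝ => D q.1 q.2) = fun q => 6 * (F q.1 q.2 - H q.1 * G q.2) := by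
      funext q; rw [hD]
    rw [this]
    exact (measurable_const.mul (hFmeas.sub ((hHmeas.comp measurable_fst).mul (hGmeas.comp measurable_snd))))
  have hcomp : Measurable (fun ω => D (X ω) (Y ω)) := hDmeas.comp hZm
  constructor
  · intro hind
    have h0 : (fun ω => D (X ω) (Y ω)) = fun _ => (0:ℝ) := by
      funext ω
      have hmul := hind.measure_inter_preimage_eq_mul (Iic (X ω)) (Iic (Y ω))
        measurableSet_Iic measurableSet_Iic
      have hset : {ω' | X ω' ≤ X ω ∧ Y ω' ≤ Y ω} = X ⁻¹' Iic (X ω) ∩ Y ⁻¹' Iic (Y ω) := rfl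
      have h1 : X ⁻¹' Iic (X ω) = {ω' | X ω' ≤ X ω} := rfl
      have h2 : Y ⁻¹' Iic (Y ω) = {ω' | Y ω' ≤ Y ω} := rfl
      rw [hD, hF, hH, hG, hset, hmul, ENNReal.toReal_mul, h1, h2]
      ring
    rw [h0]
    exact variance_zero μ
  · intro hvar
    set m : ℝ := μ[fun ω => D (X ω) (Y ω)] with hmdef
    have hmem : MemLp (fun ω => D (X ω) (Y ω)) 2 μ :=
      (memLp_top_of_bound hcomp.aestronglyMeasurable 12
        (Filter.Eventually.of_forall fun ω => by
          simpa [Real.norm_eq_abs] using hDbound (X ω) (Y ω))).mono_exponent le_top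
    have hev : evariance (fun ω => D (X ω) (Y ω)) μ = 0 := by
      have hlt := hmem.evariance_lt_top
      rcases (ENNReal.toReal_eq_zero_iff _).mp hvar with h | h
      · exact h
      · exact absurd h hlt.ne
    have hae := (evariance_eq_zero_iff hcomp.aemeasurable).mp hev
    have hSmeas : MeasurableSet {p : ℝ × ℝ | D p.1 p.2 ≠ m} :=
      (hDmeas (measurableSet_singleton m)).compl
    have hν0 : ν {p : ℝ × ℝ | D p.1 p.2 ≠ m} = 0 := by
      rw [hνdef, Measure.map_apply hZm hSmeas]
      exact ae_iff.mp hae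
    have hvol0 : volume {p : ℝ × ℝ | D p.1 p.2 ≠ m} = 0 := by
      have h1 : ∫⁻ p in {p : ℝ × ℝ | D p.1 p.2 ≠ m}, ENNReal.ofReal (f p) ∂volume = 0 := by
        rw [← withDensity_apply _ hSmeas, ← hlaw]
        exact hν0
      rw [lintegral_eq_zero_iff hfc.measurable.ennreal_ofReal] at h1
      have h2 := ae_iff.mp h1
      have h3 : {p : ℝ × ℝ | ¬ (fun p => ENNReal.ofReal (f p)) p = (0 : (ℝ × ℝ) → ENNReal) p} = univ := by
        ext p
        simp [ENNReal.ofReal_eq_zero, not_le, hfpos p]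
      rw [h3, Measure.restrict_apply_univ] at h2
      exact h2
    have hAin : ∀ U : Set (ℝ × ℝ), volume U ≠ 0 → ∃ p ∈ U, D p.1 p.2 = m := by
      intro U hU
      by_contra hcon
      push_neg at hcon
      exact hU (measure_mono_null (fun p hp => hcon p hp) hvol0)
    have hmain : ∀ (s : ℕ → Set (ℝ × ℝ)) (t : Set (ℝ × ℝ)), (∀ n, MeasurableSet (s n)) →
        Antitone s → (⋂ n, s n) = t →
        Tendsto (fun n => (ν (s n)).toReal) atTop (𝓝 ((ν t).toReal)) := by
      intro s t hms hanti hint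
      have h1 := tendsto_measure_iInter_atTop (μ := ν)
        (fun n => (hms n).nullMeasurableSet) hanti ⟨0, measure_ne_top ν _⟩
      rw [hint] at h1
      exact (ENNReal.tendsto_toReal (measure_ne_top ν t)).comp h1
    have hseq : ∀ x u : ℝ, (∀ n : ℕ, u ≤ x + 1/((n:ℝ)+1)) ↔ u ≤ x := by
      intro x u
      constructor
      · intro h
        by_contra hc
        push_neg at hc
        obtain ⟨n, hn⟩ := exists_nat_one_div_lt (sub_pos.mpr hc)
        have := h n
        linarith
      · intro h n
        have h0 : (0:ℝ) < 1/((n:ℝ)+1) := by positivity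
        linarith
    have hstep : ∀ a b : ℕ, a ≤ b → ∀ x : ℝ, x + 1/((b:ℝ)+1) ≤ x + 1/((a:ℝ)+1) := by
      intro a b hab x
      have h1 : ((a:ℝ)+1) ≤ ((b:ℝ)+1) := by
        have : (a:ℝ) ≤ (b:ℝ) := by exact_mod_cast hab
        linarith
      have h2 : 1/((b:ℝ)+1) ≤ 1/((a:ℝ)+1) := by
        apply one_div_le_one_div_of_le
        · positivity
        · exact h1
      linarith
    -- m = 0
    have hHtend0 : Tendsto (fun n : ℕ => H (-(n:ℝ))) atTop (𝓝 0) := by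
      have hanti : Antitone (fun n : ℕ => Iic (-(n:ℝ)) ×ˢ (univ : Set ℝ)) := by
        intro a b hab
        refine prod_mono (Iic_subset_Iic.mpr ?_) le_rfl
        have : (a:ℝ) ≤ (b:ℝ) := by exact_mod_cast hab
        linarith
      have hint : (⋂ n : ℕ, Iic (-(n:ℝ)) ×ˢ (univ : Set ℝ)) = (∅ : Set (ℝ × ℝ)) := by
        apply Set.eq_empty_iff_forall_notMem.mpr
        intro p hp
        obtain ⟨n, hn⟩ := exists_nat_gt (-p.1)
        have h1 : p.1 ≤ -(n:ℝ) := (Set.mem_iInter.mp hp n).1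
        linarith
      have h1 := hmain _ _ (fun n => measurableSet_Iic.prod MeasurableSet.univ) hanti hint
      rw [measure_empty] at h1
      have heq : (fun n : ℕ => H (-(n:ℝ))) = fun n : ℕ => (ν (Iic (-(n:ℝ)) ×ˢ (univ : Set ℝ))).toReal :=
        funext fun n => hHν _
      rw [heq]
      simpa using h1
    have hm0 : m = 0 := by
      have hb : ∀ n : ℕ, |m| ≤ 12 * H (-(n:ℝ)) := by
        intro n
        have hvolU : volume (Iic (-(n:ℝ)) ×ˢ (univ : Set ℝ)) ≠ 0 := by
          rw [Measure.volume_eq_prod, Measure.prod_prod, Real.volume_Iic, Real.volume_univ]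
          simp
        obtain ⟨p, hpU, hpD⟩ := hAin _ hvolU
        have hp1 : p.1 ≤ -(n:ℝ) := hpU.1
        have h1 := hH01 p.1
        have h2 := hG01 p.2
        have h3 := hF0 p.1 p.2
        have h4 := hFH p.1 p.2
        have h5 : H p.1 ≤ H (-(n:ℝ)) := hHmono hp1
        have h6 := (hH01 (-(n:ℝ))).1
        rw [← hpD, hD, abs_le]
        constructor <;> nlinarith [h1.1, h2.1, h2.2]
      have htend : Tendsto (fun n : ℕ => 12 * H (-(n:ℝ))) atTop (𝓝 (12 * 0)) :=
        hHtend0.const_mul 12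
      have hle := ge_of_tendsto htend (Filter.Eventually.of_forall hb)
      have : |m| ≤ 0 := by linarith
      exact abs_eq_zero.mp (le_antisymm this (abs_nonneg m))
    -- factorization of the CDF
    have hfac : ∀ x y : ℝ, F x y = H x * G y := by
      intro x y
      have hpick : ∀ n : ℕ, ∃ p : ℝ × ℝ, (x < p.1 ∧ p.1 ≤ x + 1/((n:ℝ)+1)) ∧
          (y < p.2 ∧ p.2 ≤ y + 1/((n:ℝ)+1)) ∧ D p.1 p.2 = m := by
        intro n
        have hpos : (0:ℝ) < 1/((n:ℝ)+1) := by positivity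
        have hvolU : volume (Ioc x (x + 1/((n:ℝ)+1)) ×ˢ Ioc y (y + 1/((n:ℝ)+1))) ≠ 0 := by
          rw [Measure.volume_eq_prod, Measure.prod_prod, Real.volume_Ioc, Real.volume_Ioc]
          simp only [ne_eq, mul_eq_zero, ENNReal.ofReal_eq_zero, not_or, not_le]
          constructor <;> linarith
        obtain ⟨p, hpU, hpD⟩ := hAin _ hvolU
        exact ⟨p, ⟨hpU.1.1, hpU.1.2⟩, ⟨hpU.2.1, hpU.2.2⟩, hpD⟩
      choose p hp1 hp2 hp3 using hpick
      have hFt : Tendsto (fun n : ℕ => F (x + 1/((n:ℝ)+1)) (y + 1/((n:ℝ)+1))) atTop (𝓝 (F x y)) := by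
        have h1 := hmain (fun n : ℕ => Iic (x + 1/((n:ℝ)+1)) ×ˢ Iic (y + 1/((n:ℝ)+1)))
          (Iic x ×ˢ Iic y)
          (fun n => measurableSet_Iic.prod measurableSet_Iic)
          (fun a b hab => prod_mono (Iic_subset_Iic.mpr (hstep a b hab x))
            (Iic_subset_Iic.mpr (hstep a b hab y)))
          (by
            ext q
            simp only [Set.mem_iInter, Set.mem_prod, Set.mem_Iic]
            constructor
            · intro h
              exact ⟨(hseq x q.1).mp fun n => (h n).1, (hseq y q.2).mp fun n => (h n).2⟩
            · intro h n
              exact ⟨(hseq x q.1).mpr h.1 n, (hseq y q.2).mpr h.2 n⟩)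
        have heq : (fun n : ℕ => F (x + 1/((n:ℝ)+1)) (y + 1/((n:ℝ)+1)))
            = fun n : ℕ => (ν (Iic (x + 1/((n:ℝ)+1)) ×ˢ Iic (y + 1/((n:ℝ)+1)))).toReal :=
          funext fun n => hFν _ _
        rw [heq, hFν]
        exact h1
      have hHt : Tendsto (fun n : ℕ => H (x + 1/((n:ℝ)+1))) atTop (𝓝 (H x)) := by
        have h1 := hmain (fun n : ℕ => Iic (x + 1/((n:ℝ)+1)) ×ˢ (univ : Set ℝ))
          (Iic x ×ˢ (univ : Set ℝ))
          (fun n => measurableSet_Iic.prod MeasurableSet.univ)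
          (fun a b hab => prod_mono (Iic_subset_Iic.mpr (hstep a b hab x)) le_rfl)
          (by
            ext q
            simp only [Set.mem_iInter, Set.mem_prod, Set.mem_Iic, Set.mem_univ, and_true]
            exact hseq x q.1)
        have heq : (fun n : ℕ => H (x + 1/((n:ℝ)+1)))
            = fun n : ℕ => (ν (Iic (x + 1/((n:ℝ)+1)) ×ˢ (univ : Set ℝ))).toReal :=
          funext fun n => hHν _
        rw [heq, hHν]
        exact h1
      have hGt : Tendsto (fun n : ℕ => G (y + 1/((n:ℝ)+1))) atTop (𝓝 (G y)) := by
        have h1 := hmain (fun n : ℕ => (univ : Set ℝ) ×ˢ Iic (y + 1/((n:ℝ)+1)))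
          ((univ : Set ℝ) ×ˢ Iic y)
          (fun n => MeasurableSet.univ.prod measurableSet_Iic)
          (fun a b hab => prod_mono le_rfl (Iic_subset_Iic.mpr (hstep a b hab y)))
          (by
            ext q
            simp only [Set.mem_iInter, Set.mem_prod, Set.mem_Iic, Set.mem_univ, true_and]
            exact hseq y q.2)
        have heq : (fun n : ℕ => G (y + 1/((n:ℝ)+1)))
            = fun n : ℕ => (ν ((univ : Set ℝ) ×ˢ Iic (y + 1/((n:ℝ)+1)))).toReal :=
          funext fun n => hGν _
        rw [heq, hGν]
        exact h1
      have hFp : Tendsto (fun n : ℕ => F (p n).1 (p n).2) atTop (𝓝 (F x y)) :=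
        tendsto_of_tendsto_of_tendsto_of_le_of_le tendsto_const_nhds hFt
          (fun n => hFmono (le_of_lt (hp1 n).1) (le_of_lt (hp2 n).1))
          (fun n => hFmono (hp1 n).2 (hp2 n).2)
      have hHp : Tendsto (fun n : ℕ => H (p n).1) atTop (𝓝 (H x)) :=
        tendsto_of_tendsto_of_tendsto_of_le_of_le tendsto_const_nhds hHt
          (fun n => hHmono (le_of_lt (hp1 n).1))
          (fun n => hHmono (hp1 n).2)
      have hGp : Tendsto (fun n : ℕ => G (p n).2) atTop (𝓝 (G y)) :=
        tendsto_of_tendsto_of_tendsto_of_le_of_le tendsto_const_nhds hGt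
          (fun n => hGmono (le_of_lt (hp2 n).1))
          (fun n => hGmono (hp2 n).2)
      have hEq : (fun n : ℕ => F (p n).1 (p n).2) = fun n : ℕ => H (p n).1 * G (p n).2 := by
        funext n
        have h := hp3 n
        rw [hm0, hD] at h
        linarith
      refine tendsto_nhds_unique hFp ?_
      rw [hEq]
      exact hHp.mul hGp
    -- conclude independence
    have hmeq : (inferInstance : MeasurableSpace ℝ) = borel ℝ := BorelSpace.measurable_eq
    have hpX : MeasurableSpace.comap X (inferInstance : MeasurableSpace ℝ)
        = MeasurableSpace.generateFrom {s : Set Ω | ∃ t ∈ Set.range (Iic : ℝ → Set ℝ), X ⁻¹' t = s} := by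
      rw [hmeq, borel_eq_generateFrom_Iic ℝ, MeasurableSpace.comap_generateFrom]
      rfl
    have hpY : MeasurableSpace.comap Y (inferInstance : MeasurableSpace ℝ)
        = MeasurableSpace.generateFrom {s : Set Ω | ∃ t ∈ Set.range (Iic : ℝ → Set ℝ), Y ⁻¹' t = s} := by
      rw [hmeq, borel_eq_generateFrom_Iic ℝ, MeasurableSpace.comap_generateFrom]
      rfl
    have hIS : IndepSets {s : Set Ω | ∃ t ∈ Set.range (Iic : ℝ → Set ℝ), X ⁻¹' t = s}
        {s : Set Ω | ∃ t ∈ Set.range (Iic : ℝ → Set ℝ), Y ⁻¹' t = s} μ := by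
      rw [IndepSets_iff]
      rintro s t ⟨_, ⟨a, rfl⟩, rfl⟩ ⟨_, ⟨b, rfl⟩, rfl⟩
      have e1 : X ⁻¹' Iic a ∩ Y ⁻¹' Iic b = {ω | X ω ≤ a ∧ Y ω ≤ b} := rfl
      have e2 : X ⁻¹' Iic a = {ω | X ω ≤ a} := rfl
      have e3 : Y ⁻¹' Iic b = {ω | Y ω ≤ b} := rfl
      have hT : (μ (X ⁻¹' Iic a ∩ Y ⁻¹' Iic b)).toReal
          = (μ (X ⁻¹' Iic a) * μ (Y ⁻¹' Iic b)).toReal := by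
        rw [ENNReal.toReal_mul, e1, e2, e3, ← hF, ← hH, ← hG]
        exact hfac a b
      exact (ENNReal.toReal_eq_toReal_iff' (measure_ne_top μ _)
        (ENNReal.mul_ne_top (measure_ne_top μ _) (measure_ne_top μ _))).mp hT
    exact IndepSets.indep (measurable_iff_comap_le.mp hX) (measurable_iff_comap_le.mp hY)
      (isPiSystem_Iic.comap X) (isPiSystem_Iic.comap Y) hpX hpY hIS
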